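/- Let P : {1,…,n} → {1,…,n'} be a block map, w_i > 0, Π = {x ∈ ℝⁿ : w_j x_i = w_i x_j whenever P(i) = P(j)}, π the orthogonal projection onto Π, and e_{[r]} = π(e_i)/w_i the block basis of Π. Then for any λ = Σ λ_i e_i ∈ ℝⁿ, writing π(λ) = Σ_r λ'_{[r]} e_{[r]}, one has λ'_{[r]} = Σ_{j : P(j) = [r]} w_j λ_j. -/

import Mathlib

open Finset

noncomputable section FoldAux

variable {n n' : ℕ}

/-- block vector: `(v B w r) i = w i` if `B i = r`, else 0. -/
def foldV (B : Fin n → Fin n') (w : Fin n → ℝ) (r : Fin n') : EuclideanSpace ℝ (Fin n) :=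
  WithLp.toLp 2 (fun i => if B i = r then w i else 0)

lemma foldV_mem (B : Fin n → Fin n') (w : Fin n → ℝ)
    (Pl : Submodule ℝ (EuclideanSpace ℝ (Fin n)))
    (hPl : (Pl : Set (EuclideanSpace ℝ (Fin n))) =
      {x | ∀ i j, B i = B j → w j * x i = w i * x j}) (r : Fin n') :
    foldV B w r ∈ Pl := by
  rw [← SetLike.mem_coe, hPl]
  intro i j h
  simp only [foldV, PiLp.toLp_apply, h]
  split <;> ring

lemma inner_foldV (B : Fin n → Fin n') (w : Fin n → ℝ) (r : Fin n')
    (y : EuclideanSpace ℝ (Fin n)) :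
    (inner ℝ y (foldV B w r) : ℝ) = ∑ j ∈ univ.filter (fun j => B j = r), w j * y j := by
  rw [PiLp.inner_apply, Finset.sum_filter]
  simp [foldV, RCLike.inner_apply, mul_comm, mul_ite]

lemma inner_foldV_foldV (B : Fin n → Fin n') (w : Fin n → ℝ) (s r : Fin n') :
    (inner ℝ (foldV B w s) (foldV B w r) : ℝ) =
      if s = r then ∑ j ∈ univ.filter (fun j => B j = r), w j ^ 2 else 0 := by
  rw [PiLp.inner_apply]
  split
  · subst ‹s = r›
    rw [Finset.sum_filter]
    refine Finset.sum_congr rfl fun i _ => ?_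
    simp only [foldV, RCLike.inner_apply, conj_trivial, sq]
    split <;> simp
  · apply Finset.sum_eq_zero
    intro i _
    simp only [foldV, RCLike.inner_apply, conj_trivial]
    rcases eq_or_ne (B i) s with h | h
    · rw [if_pos h, if_neg (by rw [h]; assumption), zero_mul]
    · rw [if_neg h, mul_zero]

lemma foldN_pos (B : Fin n → Fin n') (σ : Fin n' → Fin n) (hσ : ∀ r, B (σ r) = r)
    (w : Fin n → ℝ) (hw : ∀ i, 0 < w i) (r : Fin n') :
    0 < ∑ j ∈ univ.filter (fun j => B j = r), w j ^ 2 := by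
  apply Finset.sum_pos'
  · intro i _; positivity
  · exact ⟨σ r, by simp [hσ r], pow_pos (hw _) 2⟩

lemma mem_span (B : Fin n → Fin n') (σ : Fin n' → Fin n) (hσ : ∀ r, B (σ r) = r)
    (w : Fin n → ℝ) (hw : ∀ i, 0 < w i)
    (Pl : Submodule ℝ (EuclideanSpace ℝ (Fin n)))
    (hPl : (Pl : Set (EuclideanSpace ℝ (Fin n))) =
      {x | ∀ i j, B i = B j → w j * x i = w i * x j})
    (z : EuclideanSpace ℝ (Fin n)) (hz : z ∈ Pl) :
    z = ∑ r : Fin n', (z (σ r) / w (σ r)) • foldV B w r := by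
  have hz' : ∀ i j, B i = B j → w j * z i = w i * z j := by
    rw [← SetLike.mem_coe, hPl] at hz; exact hz
  ext i
  have : (∑ r : Fin n', (z (σ r) / w (σ r)) • foldV B w r) i
      = ∑ r : Fin n', (z (σ r) / w (σ r)) * (if B i = r then w i else 0) := by
    have := Finset.sum_apply i Finset.univ (fun r => (z (σ r) / w (σ r)) • foldV B w r)
    rw [WithLp.ofLp_sum, this]
    simp [foldV]
  rw [this]
  rw [Finset.sum_eq_single (B i)]
  · rw [if_pos rfl]
    have h := hz' i (σ (B i)) (hσ (B i)).symm
    have hwne : w (σ (B i)) ≠ 0 := (hw _).ne'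
    field_simp
    linarith [h]
  · intro b _ hb; rw [if_neg (Ne.symm hb), mul_zero]
  · intro h; exact absurd (Finset.mem_univ _) h

lemma proj_eq (B : Fin n → Fin n') (σ : Fin n' → Fin n) (hσ : ∀ r, B (σ r) = r)
    (w : Fin n → ℝ) (hw : ∀ i, 0 < w i)
    (Pl : Submodule ℝ (EuclideanSpace ℝ (Fin n)))
    (hPl : (Pl : Set (EuclideanSpace ℝ (Fin n))) =
      {x | ∀ i j, B i = B j → w j * x i = w i * x j})
    (y : EuclideanSpace ℝ (Fin n)) :
    (Submodule.orthogonalProjectionOnto Pl y : EuclideanSpace ℝ (Fin n)) =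
      ∑ r : Fin n',
        ((∑ j ∈ univ.filter (fun j => B j = r), w j * y j) /
          (∑ j ∈ univ.filter (fun j => B j = r), w j ^ 2)) • foldV B w r := by
  apply Submodule.eq_starProjection_of_mem_of_inner_eq_zero
  · exact Submodule.sum_mem _ fun r _ => Submodule.smul_mem _ _ (foldV_mem B w Pl hPl r)
  · intro z hz
    rw [mem_span B σ hσ w hw Pl hPl z hz, inner_sum]
    apply Finset.sum_eq_zero
    intro r _
    rw [real_inner_smul_right]
    suffices h : (inner ℝ (y - ∑ r : Fin n',
        ((∑ j ∈ univ.filter (fun j => B j = r), w j * y j) /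
          (∑ j ∈ univ.filter (fun j => B j = r), w j ^ 2)) • foldV B w r) (foldV B w r) : ℝ) = 0 by
      rw [h, mul_zero]
    rw [inner_sub_left, sum_inner]
    have hdiag : ∀ s ∈ (univ : Finset (Fin n')),
        (inner ℝ (((∑ j ∈ univ.filter (fun j => B j = s), w j * y j) /
          (∑ j ∈ univ.filter (fun j => B j = s), w j ^ 2)) • foldV B w s) (foldV B w r) : ℝ)
        = if s = r then (∑ j ∈ univ.filter (fun j => B j = r), w j * y j) else 0 := by
      intro s _
      rw [real_inner_smul_left, inner_foldV_foldV]
      split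
      · subst ‹s = r›
        exact div_mul_cancel₀ _ (foldN_pos B σ hσ w hw s).ne'
      · rw [mul_zero]
    rw [Finset.sum_congr rfl hdiag, Finset.sum_ite_eq' univ r, if_pos (Finset.mem_univ r),
      inner_foldV, sub_self]

end FoldAux

/-- Proposition 4.3(b): in the block basis `e_[r] = π(e_{σ r})/w_{σ r}`
of the folding plane Π, the coordinates of the orthogonal projection of
`λ = Σ λ_i e_i` are `λ'_[r] = Σ_{j : B j = r} w_j λ_j`. -/
theorem folding_plane_projection_coordinates
    (n n' : ℕ) (B : Fin n → Fin n') (σ : Fin n' → Fin n)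
    (hσ : ∀ r, B (σ r) = r)
    (w : Fin n → ℝ) (hw : ∀ i, 0 < w i)
    (Pl : Submodule ℝ (EuclideanSpace ℝ (Fin n)))
    (hPl : (Pl : Set (EuclideanSpace ℝ (Fin n))) =
      {x | ∀ i j, B i = B j → w j * x i = w i * x j})
    (x : EuclideanSpace ℝ (Fin n)) :
    Submodule.orthogonalProjectionOnto Pl x =
      ∑ r : Fin n',
        (∑ j ∈ Finset.univ.filter (fun j => B j = r), w j * x j) •
          ((w (σ r))⁻¹ • Submodule.orthogonalProjectionOnto Pl (EuclideanSpace.single (σ r) (1:ℝ))) := by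
  apply Subtype.coe_injective
  push_cast
  rw [proj_eq B σ hσ w hw Pl hPl x]
  have hsingle : ∀ r : Fin n',
      ((Submodule.orthogonalProjectionOnto Pl (EuclideanSpace.single (σ r) (1:ℝ)) : EuclideanSpace ℝ (Fin n)))
      = (w (σ r) / (∑ j ∈ Finset.univ.filter (fun j => B j = r), w j ^ 2)) • foldV B w r := by
    intro r
    rw [proj_eq B σ hσ w hw Pl hPl]
    rw [Finset.sum_eq_single r]
    · congr 1
      congr 1
      rw [Finset.sum_eq_single (σ r)]
      · simp
      · intro j hj hjr
        rw [Finset.mem_filter] at hj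
        rw [EuclideanSpace.single_apply, if_neg, mul_zero]
        intro hje; exact hjr (hje ▸ rfl)
      · intro h; exact absurd (by simp [hσ r] : σ r ∈ _) h
    · intro s _ hs
      have : (∑ j ∈ Finset.univ.filter (fun j => B j = s), w j * EuclideanSpace.single (σ r) (1:ℝ) j) = 0 := by
        apply Finset.sum_eq_zero
        intro j hj
        rw [Finset.mem_filter] at hj
        rw [EuclideanSpace.single_apply, if_neg, mul_zero]
        intro hje
        exact hs (by rw [← hj.2, hje, hσ])
      rw [this, zero_div, zero_smul]
    · intro h; exact absurd (Finset.mem_univ _) h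
  apply Finset.sum_congr rfl
  intro r _
  rw [hsingle r, smul_smul, smul_smul, div_eq_mul_inv, div_eq_mul_inv]
  congr 1
  have : w (σ r) ≠ 0 := (hw _).ne'
  field_simp
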